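/- For odd n ≥ 3, the subgroup 𝒦 of SL(n,ℝ) generated by matrices of the form diag(1, B) and diag(B, 1) with B ∈ SL(n-1,ℝ) acts transitively on ℝ^n \ {0}. -/

import Mathlib

open Matrix

/-- Elements of SL(n,ℝ) of the form diag(1, B), B ∈ SL(n-1,ℝ). -/
def genSet1 (n : ℕ) (h : 1 + (n - 1) = n) : Set (Matrix.SpecialLinearGroup (Fin n) ℝ) :=
  {g | ∃ B : Matrix (Fin (n - 1)) (Fin (n - 1)) ℝ, B.det = 1 ∧
    (g : Matrix (Fin n) (Fin n) ℝ) =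
      Matrix.reindex (finSumFinEquiv.trans (finCongr h)) (finSumFinEquiv.trans (finCongr h))
        (Matrix.fromBlocks 1 0 0 B)}

/-- Elements of SL(n,ℝ) of the form diag(B, 1), B ∈ SL(n-1,ℝ). -/
def genSet2 (n : ℕ) (h : (n - 1) + 1 = n) : Set (Matrix.SpecialLinearGroup (Fin n) ℝ) :=
  {g | ∃ B : Matrix (Fin (n - 1)) (Fin (n - 1)) ℝ, B.det = 1 ∧
    (g : Matrix (Fin n) (Fin n) ℝ) =
      Matrix.reindex (finSumFinEquiv.trans (finCongr h)) (finSumFinEquiv.trans (finCongr h))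
        (Matrix.fromBlocks B 0 0 1)}

lemma pivot_lemma (m : ℕ) (hm : 2 ≤ m) (v : Fin m → ℝ) (hv : v ≠ 0) :
    ∃ B : Matrix (Fin m) (Fin m) ℝ, B.det = 1 ∧
      B *ᵥ v = Pi.single (⟨0, by omega⟩ : Fin m) 1 := by
  have h0 : (0 : ℕ) < m := by omega
  have h1 : (1 : ℕ) < m := by omega
  set z0 : Fin m := ⟨0, h0⟩ with hz0
  set z1 : Fin m := ⟨1, h1⟩ with hz1
  have h01 : z0 ≠ z1 := by simp [hz0, hz1, Fin.ext_iff]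
  have h10 : z1 ≠ z0 := Ne.symm h01
  obtain ⟨i, hi⟩ : ∃ i, v i ≠ 0 := by
    by_contra h; push_neg at h; exact hv (funext h)
  set σ : Equiv.Perm (Fin m) := Equiv.swap z0 i with hσ
  set w : Fin m → ℝ := v ∘ σ with hw
  have ha : w z0 ≠ 0 := by simpa [hw, hσ, Equiv.swap_apply_left] using hi
  set a : ℝ := w z0 with haa
  set s : ℝ := if i = z0 then 1 else -1 with hs
  set M : Matrix (Fin m) (Fin m) ℝ := Matrix.of fun k j =>
    if k = z0 then (if j = z0 then a⁻¹ else 0)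
    else if k = z1 then (if j = z0 then -(s * w z1) else if j = z1 then s * a else 0)
    else if j = z0 then -(w k) * a⁻¹ else if j = k then 1 else 0 with hM
  have htri : M.BlockTriangular OrderDual.toDual := by
    intro k j hkj
    have hkj' : k < j := hkj
    have hj0 : j ≠ z0 := by
      intro h; rw [h] at hkj'; exact absurd hkj' (by simp [hz0, Fin.lt_iff_val_lt_val])
    have hjk : j ≠ k := (ne_of_gt hkj')
    rcases eq_or_ne k z0 with h | h
    · simp [hM, h, hj0]
    · rcases eq_or_ne k z1 with h' | h'
      · have hj1 : j ≠ z1 := by rw [← h']; exact hjk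
        simp [hM, h, h', hj0, hj1]
      · simp [hM, h, h', hj0, hjk]
  have hdiag : ∀ k, M k k = (if k = z0 then a⁻¹ else 1) * (if k = z1 then s * a else 1) := by
    intro k
    rcases eq_or_ne k z0 with h | h
    · simp [hM, h, h01.symm, Ne.symm h01, h01]
    · rcases eq_or_ne k z1 with h' | h'
      · simp [hM, h, h', h10]
      · simp [hM, h, h']
  have hdet : M.det = s := by
    rw [Matrix.det_of_lowerTriangular M htri]
    have e1 : ∏ k, M k k
        = (∏ k, (if k = z0 then a⁻¹ else 1)) * ∏ k, (if k = z1 then s * a else 1) := by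
      rw [← Finset.prod_mul_distrib]; exact Finset.prod_congr rfl (fun k _ => hdiag k)
    rw [e1, Finset.prod_ite_eq', Finset.prod_ite_eq']
    simp only [Finset.mem_univ, if_true]
    field_simp
  have hmulw : M *ᵥ w = Pi.single z0 1 := by
    ext k
    rcases eq_or_ne k z0 with h | h
    · rw [h]
      show ∑ j, M z0 j * w j = _
      have : ∀ j, M z0 j * w j = if j = z0 then a⁻¹ * w j else 0 := by
        intro j; rcases eq_or_ne j z0 with h' | h' <;> simp [hM, h']
      simp_rw [this]
      rw [Finset.sum_ite_eq']
      simp [← haa, inv_mul_cancel₀ ha]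
    · show ∑ j, M k j * w j = _
      rcases eq_or_ne k z1 with h' | h'
      · have : ∀ j, M k j * w j =
            (if j = z0 then -(s * w z1) * w j else 0) + (if j = z1 then s * a * w j else 0) := by
          intro j
          rcases eq_or_ne j z0 with h'' | h''
          · simp [hM, h, h', h'', h01.symm, Ne.symm h01, h01]
          · rcases eq_or_ne j z1 with h''' | h''' <;> simp [hM, h, h', h'', h''', h10]
        simp_rw [this]
        rw [Finset.sum_add_distrib, Finset.sum_ite_eq', Finset.sum_ite_eq']
        simp only [Finset.mem_univ, if_true, Pi.single_eq_of_ne h]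
        rw [← haa]; ring
      · have : ∀ j, M k j * w j =
            (if j = z0 then -(w k) * a⁻¹ * w j else 0) + (if j = k then w j else 0) := by
          intro j
          rcases eq_or_ne j z0 with h'' | h''
          · simp [hM, h, h', h'', Ne.symm h]
          · rcases eq_or_ne j k with h''' | h''' <;> simp [hM, h, h', h'', h''']
        simp_rw [this]
        rw [Finset.sum_add_distrib, Finset.sum_ite_eq', Finset.sum_ite_eq']
        simp only [Finset.mem_univ, if_true, Pi.single_eq_of_ne h, ← haa]
        field_simp
        ring
  refine ⟨M.submatrix id σ, ?_, ?_⟩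
  · rw [Matrix.det_permute', hdet, hσ]
    rcases eq_or_ne i z0 with h | h
    · simp [h, hs]
    · rw [Equiv.Perm.sign_swap (Ne.symm h)]
      simp [hs, h]
  · have : M.submatrix id σ *ᵥ v = (M *ᵥ (v ∘ σ.symm)) ∘ id := by
      exact Matrix.submatrix_mulVec_equiv M v id σ
    rw [this]
    have hsymm : σ.symm = σ := by rw [hσ]; exact Equiv.symm_swap _ _
    rw [hsymm, ← hw, hmulw]
    rfl

lemma sl_transitive (m : ℕ) (hm : 2 ≤ m) (v w : Fin m → ℝ) (hv : v ≠ 0) (hw : w ≠ 0) :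
    ∃ B : Matrix (Fin m) (Fin m) ℝ, B.det = 1 ∧ B *ᵥ v = w := by
  obtain ⟨Bv, hBv, hBvv⟩ := pivot_lemma m hm v hv
  obtain ⟨Bw, hBw, hBww⟩ := pivot_lemma m hm w hw
  refine ⟨Bw⁻¹ * Bv, ?_, ?_⟩
  · rw [Matrix.det_mul, Matrix.det_nonsing_inv, hBv, hBw]; simp
  · rw [← Matrix.mulVec_mulVec, hBvv, ← hBww, Matrix.mulVec_mulVec,
      Matrix.nonsing_inv_mul _ (by rw [hBw]; exact isUnit_one), Matrix.one_mulVec]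

lemma act2 (n : ℕ) (h2 : (n - 1) + 1 = n) (B : Matrix (Fin (n-1)) (Fin (n-1)) ℝ)
    (hB : B.det = 1) :
    ∃ g ∈ genSet2 n h2, ∀ x : Fin n → ℝ, (g : Matrix (Fin n) (Fin n) ℝ) *ᵥ x =
      (Sum.elim (B *ᵥ (x ∘ (finSumFinEquiv.trans (finCongr h2)) ∘ Sum.inl))
        (x ∘ (finSumFinEquiv.trans (finCongr h2)) ∘ Sum.inr)) ∘
        (finSumFinEquiv.trans (finCongr h2)).symm := by
  set e := finSumFinEquiv.trans (finCongr h2)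
  refine ⟨⟨Matrix.reindex e e (Matrix.fromBlocks B 0 0 1), by
    rw [Matrix.det_reindex_self, Matrix.det_fromBlocks_zero₂₁, hB, Matrix.det_one, mul_one]⟩,
    ⟨B, hB, rfl⟩, fun x => ?_⟩
  show Matrix.reindex e e (Matrix.fromBlocks B 0 0 1) *ᵥ x = _
  rw [Matrix.reindex_apply, Matrix.submatrix_mulVec_equiv, Equiv.symm_symm,
    Matrix.fromBlocks_mulVec]
  simp [Matrix.zero_mulVec, Matrix.one_mulVec, Function.comp_assoc]

lemma act1 (n : ℕ) (h1 : 1 + (n - 1) = n) (B : Matrix (Fin (n-1)) (Fin (n-1)) ℝ)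
    (hB : B.det = 1) :
    ∃ g ∈ genSet1 n h1, ∀ x : Fin n → ℝ, (g : Matrix (Fin n) (Fin n) ℝ) *ᵥ x =
      (Sum.elim (x ∘ (finSumFinEquiv.trans (finCongr h1)) ∘ Sum.inl)
        (B *ᵥ (x ∘ (finSumFinEquiv.trans (finCongr h1)) ∘ Sum.inr))) ∘
        (finSumFinEquiv.trans (finCongr h1)).symm := by
  set e := finSumFinEquiv.trans (finCongr h1)
  refine ⟨⟨Matrix.reindex e e (Matrix.fromBlocks 1 0 0 B), by
    rw [Matrix.det_reindex_self, Matrix.det_fromBlocks_zero₂₁, hB, Matrix.det_one, one_mul]⟩,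
    ⟨B, hB, rfl⟩, fun x => ?_⟩
  show Matrix.reindex e e (Matrix.fromBlocks 1 0 0 B) *ᵥ x = _
  rw [Matrix.reindex_apply, Matrix.submatrix_mulVec_equiv, Equiv.symm_symm,
    Matrix.fromBlocks_mulVec]
  simp [Matrix.zero_mulVec, Matrix.one_mulVec, Function.comp_assoc]

lemma stepA (n : ℕ) (hn : 3 ≤ n) (h2 : (n - 1) + 1 = n) (x : Fin n → ℝ)
    (hfst : x ∘ (finSumFinEquiv.trans (finCongr h2)) ∘ Sum.inl ≠ 0)
    (hlast : x ((finSumFinEquiv.trans (finCongr h2)) (Sum.inr 0)) = 0) :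
    ∃ g ∈ genSet2 n h2, (g : Matrix (Fin n) (Fin n) ℝ) *ᵥ x =
      Pi.single (⟨0, by omega⟩ : Fin n) 1 := by
  set e := finSumFinEquiv.trans (finCongr h2) with he
  have hvl : ∀ j : Fin (n-1), (e (Sum.inl j) : Fin n).val = j.val := by
    intro j; simp [he]
  have hvr : ∀ j : Fin 1, (e (Sum.inr j) : Fin n).val = (n-1) + j.val := by
    intro j; simp [he]
  obtain ⟨B, hB, hBx⟩ := pivot_lemma (n-1) (by omega) _ hfst
  obtain ⟨g, hg, hact⟩ := act2 n h2 B hB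
  refine ⟨g, hg, ?_⟩
  rw [hact x]
  funext k
  obtain ⟨c, rfl⟩ := e.surjective k
  simp only [Function.comp_apply, ← he, Equiv.symm_apply_apply]
  cases c with
  | inl j =>
    show (B *ᵥ (x ∘ e ∘ Sum.inl)) j = _
    rw [hBx, Pi.single_apply, Pi.single_apply]
    congr 1
    simp only [eq_iff_iff, Fin.ext_iff, hvl]
  | inr j =>
    show x (e (Sum.inr j)) = _
    have hj : j = 0 := Subsingleton.elim j 0
    rw [hj, hlast, Pi.single_apply, if_neg]
    simp only [Fin.ext_iff, hvr]
    omega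

lemma stepB (n : ℕ) (hn : 3 ≤ n) (h1 : 1 + (n - 1) = n) (x : Fin n → ℝ)
    (hsnd : x ∘ (finSumFinEquiv.trans (finCongr h1)) ∘ Sum.inr ≠ 0) :
    ∃ g ∈ genSet1 n h1, (g : Matrix (Fin n) (Fin n) ℝ) *ᵥ x =
      fun k : Fin n => if k.val = 0 then x ⟨0, by omega⟩ else if k.val = 1 then 1 else 0 := by
  set e := finSumFinEquiv.trans (finCongr h1) with he
  have hvl : ∀ j : Fin 1, (e (Sum.inl j) : Fin n).val = j.val := by
    intro j; simp [he]
  have hvr : ∀ j : Fin (n-1), (e (Sum.inr j) : Fin n).val = 1 + j.val := by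
    intro j; simp [he]
  obtain ⟨B, hB, hBx⟩ := pivot_lemma (n-1) (by omega) _ hsnd
  obtain ⟨g, hg, hact⟩ := act1 n h1 B hB
  refine ⟨g, hg, ?_⟩
  rw [hact x]
  funext k
  obtain ⟨c, rfl⟩ := e.surjective k
  simp only [Function.comp_apply, ← he, Equiv.symm_apply_apply]
  cases c with
  | inl j =>
    have hj : j = 0 := Subsingleton.elim j 0
    subst hj
    show x (e (Sum.inl 0)) = _
    rw [if_pos (by simpa using hvl 0)]
    exact congrArg x (Fin.ext (by simpa using hvl 0))
  | inr j =>
    show (B *ᵥ (x ∘ e ∘ Sum.inr)) j = _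
    rw [hBx, Pi.single_apply]
    by_cases hc : j = (⟨0, by omega⟩ : Fin (n-1))
    · rw [if_pos hc, if_neg (by simp [hvr]), if_pos (by simp [hvr, hc])]
    · rw [if_neg hc, if_neg (by simp [hvr]), if_neg (by
        simp only [hvr]
        intro h
        exact hc (Fin.ext (by simpa using by omega : (j : ℕ) = 0)))]

lemma reduce (n : ℕ) (hn : 3 ≤ n) (h1 : 1 + (n - 1) = n) (h2 : (n - 1) + 1 = n)
    (x : Fin n → ℝ) (hx : x ≠ 0) :
    ∃ g ∈ Subgroup.closure (genSet1 n h1 ∪ genSet2 n h2),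
      (g : Matrix (Fin n) (Fin n) ℝ) *ᵥ x = Pi.single (⟨0, by omega⟩ : Fin n) 1 := by
  set e1 := finSumFinEquiv.trans (finCongr h1) with he1
  set e2 := finSumFinEquiv.trans (finCongr h2) with he2
  have hvl1 : ∀ j : Fin 1, (e1 (Sum.inl j) : Fin n).val = j.val := by intro j; simp [he1]
  have hvr1 : ∀ j : Fin (n-1), (e1 (Sum.inr j) : Fin n).val = 1 + j.val := by intro j; simp [he1]
  have hvl2 : ∀ j : Fin (n-1), (e2 (Sum.inl j) : Fin n).val = j.val := by intro j; simp [he2]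
  have hvr2 : ∀ j : Fin 1, (e2 (Sum.inr j) : Fin n).val = (n-1) + j.val := by intro j; simp [he2]
  by_cases hsnd : x ∘ e1 ∘ Sum.inr = 0
  · -- last n-1 coordinates of x vanish; single genSet2 step
    have hlast : x (e2 (Sum.inr 0)) = 0 := by
      have : e2 (Sum.inr 0) = e1 (Sum.inr ⟨n-2, by omega⟩) := by
        apply Fin.ext; rw [hvr1, hvr2]; simp; omega
      rw [this]
      exact congrFun hsnd ⟨n-2, by omega⟩
    have hfst : x ∘ e2 ∘ Sum.inl ≠ 0 := by
      intro h0
      apply hx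
      funext k
      rcases lt_or_ge k.val (n-1) with hk | hk
      · have : k = e2 (Sum.inl ⟨k.val, hk⟩) := Fin.ext (by rw [hvl2])
        rw [this]; exact congrFun h0 ⟨k.val, hk⟩
      · have hk1 : 1 ≤ k.val := by omega
        have : k = e1 (Sum.inr ⟨k.val - 1, by omega⟩) := Fin.ext (by simp [hvr1]; omega)
        rw [this]; exact congrFun hsnd ⟨k.val - 1, by omega⟩
    obtain ⟨g, hg, hgx⟩ := stepA n hn h2 x hfst hlast
    exact ⟨g, Subgroup.subset_closure (Set.mem_union_right _ hg), hgx⟩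
  · -- two steps
    obtain ⟨g1, hg1, hg1x⟩ := stepB n hn h1 x hsnd
    set x' : Fin n → ℝ :=
      fun k : Fin n => if k.val = 0 then x ⟨0, by omega⟩ else if k.val = 1 then 1 else 0 with hx'
    have hfst : x' ∘ e2 ∘ Sum.inl ≠ 0 := by
      intro h0
      have := congrFun h0 ⟨1, by omega⟩
      simp only [Function.comp_apply, hx', Pi.zero_apply] at this
      rw [if_neg (by simp [hvl2]), if_pos (by simp [hvl2])] at this
      exact one_ne_zero this
    have hlast : x' (e2 (Sum.inr 0)) = 0 := by
      simp only [hx']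
      rw [if_neg (by rw [hvr2]; omega), if_neg (by rw [hvr2]; omega)]
    obtain ⟨g2, hg2, hg2x⟩ := stepA n hn h2 x' hfst hlast
    refine ⟨g2 * g1, Subgroup.mul_mem _
      (Subgroup.subset_closure (Set.mem_union_right _ hg2))
      (Subgroup.subset_closure (Set.mem_union_left _ hg1)), ?_⟩
    rw [Matrix.SpecialLinearGroup.coe_mul, ← Matrix.mulVec_mulVec, hg1x]
    exact hg2x

/-- For odd n ≥ 3, the subgroup 𝒦 of SL(n,ℝ) generated by the matrices
diag(1, B) and diag(B, 1), B ∈ SL(n-1,ℝ), acts transitively on ℝⁿ \ {0}. -/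
theorem gen_transitive (n : ℕ) (hn : 3 ≤ n) (hodd : Odd n)
    (x y : Fin n → ℝ) (hx : x ≠ 0) (hy : y ≠ 0) :
    ∃ g ∈ Subgroup.closure (genSet1 n (by omega) ∪ genSet2 n (by omega)),
      (g : Matrix (Fin n) (Fin n) ℝ) *ᵥ x = y := by
  obtain ⟨gx, hgx, hgxx⟩ := reduce n hn (by omega) (by omega) x hx
  obtain ⟨gy, hgy, hgyy⟩ := reduce n hn (by omega) (by omega) y hy
  refine ⟨gy⁻¹ * gx, Subgroup.mul_mem _ (Subgroup.inv_mem _ hgy) hgx, ?_⟩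
  rw [Matrix.SpecialLinearGroup.coe_mul, ← Matrix.mulVec_mulVec, hgxx, ← hgyy,
    Matrix.mulVec_mulVec, ← Matrix.SpecialLinearGroup.coe_mul, inv_mul_cancel,
    Matrix.SpecialLinearGroup.coe_one, Matrix.one_mulVec]
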